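/- arXiv:1010.5105 — 3 statements merged into one kernel-verified Lean document; each statement's English description precedes it below -/
import Mathlib

section
/- Let H:[0,∞)→[0,∞) be increasing and regularly varying at infinity with index ρ>0, and let A:[0,∞)→[0,∞) be continuous increasing with A(t)/t → C as t→∞ for some finite constant C ≥ 0. Then (1+ρ)/(t·H(t)) · ∫₀ᵗ H(s) dA(s) → C as t→∞. -/
open MeasureTheory Filter Set Topology

private lemma H_integrableOn (A : StieltjesFunction ℝ) {H : ℝ → ℝ} (hH : Monotone H) (a b : ℝ) :
    IntegrableOn H (Ioc a b) A.measure :=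
  ((hH.monotoneOn _).integrableOn_isCompact isCompact_Icc).mono_set Ioc_subset_Icc_self

private lemma measure_Ioc_toReal (A : StieltjesFunction ℝ) {a b : ℝ} (hab : a ≤ b) :
    (A.measure (Ioc a b)).toReal = A b - A a := by
  rw [A.measure_Ioc, ENNReal.toReal_ofReal (sub_nonneg.2 (A.mono hab))]

private lemma piece_le (A : StieltjesFunction ℝ) {H : ℝ → ℝ} (hH : Monotone H) {a b : ℝ}
    (hab : a ≤ b) :
    ∫ s in Ioc a b, H s ∂A.measure ≤ H b * (A b - A a) := by
  have hfin : A.measure (Ioc a b) < ⊤ := by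
    rw [A.measure_Ioc]; exact ENNReal.ofReal_lt_top
  have h1 : ∫ s in Ioc a b, H s ∂A.measure ≤ ∫ _ in Ioc a b, H b ∂A.measure :=
    setIntegral_mono_on (H_integrableOn A hH a b) (integrableOn_const hfin.ne)
      measurableSet_Ioc (fun x hx => hH hx.2)
  rw [setIntegral_const, smul_eq_mul, measureReal_def, measure_Ioc_toReal A hab, mul_comm] at h1
  exact h1

private lemma le_piece (A : StieltjesFunction ℝ) {H : ℝ → ℝ} (hH : Monotone H) {a b : ℝ}
    (hab : a ≤ b) :
    H a * (A b - A a) ≤ ∫ s in Ioc a b, H s ∂A.measure := by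
  have hfin : A.measure (Ioc a b) < ⊤ := by
    rw [A.measure_Ioc]; exact ENNReal.ofReal_lt_top
  have h1 : ∫ _ in Ioc a b, H a ∂A.measure ≤ ∫ s in Ioc a b, H s ∂A.measure :=
    setIntegral_mono_on (integrableOn_const hfin.ne) (H_integrableOn A hH a b)
      measurableSet_Ioc (fun x hx => hH hx.1.le)
  rw [setIntegral_const, smul_eq_mul, measureReal_def, measure_Ioc_toReal A hab, mul_comm] at h1
  exact h1

private lemma decomp (A : StieltjesFunction ℝ) {H : ℝ → ℝ} (hH : Monotone H)
    {δ t : ℝ} (hδ0 : 0 < δ) (hδ1 : δ ≤ 1) (ht : 0 ≤ t) (n : ℕ) :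
    ∫ s in Ioc (0:ℝ) t, H s ∂A.measure =
      (∫ s in Ioc (0:ℝ) (δ^n * t), H s ∂A.measure) +
      ∑ k ∈ Finset.range n, ∫ s in Ioc (δ^(k+1) * t) (δ^k * t), H s ∂A.measure := by
  induction n with
  | zero => simp
  | succ n ih =>
    have h1 : (0:ℝ) ≤ δ^(n+1) * t := by positivity
    have h2 : δ^(n+1) * t ≤ δ^n * t :=
      mul_le_mul_of_nonneg_right (pow_le_pow_of_le_one hδ0.le hδ1 (Nat.le_succ n)) ht
    have hsplit : ∫ s in Ioc (0:ℝ) (δ^n * t), H s ∂A.measure =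
        (∫ s in Ioc (0:ℝ) (δ^(n+1) * t), H s ∂A.measure) +
        ∫ s in Ioc (δ^(n+1) * t) (δ^n * t), H s ∂A.measure := by
      rw [← MeasureTheory.setIntegral_union (Ioc_disjoint_Ioc_of_le le_rfl) measurableSet_Ioc
        (H_integrableOn A hH _ _) (H_integrableOn A hH _ _),
        Ioc_union_Ioc_eq_Ioc h1 h2]
    rw [Finset.sum_range_succ, ih, hsplit]
    ring

set_option maxHeartbeats 1000000 in
private lemma numeric_choice (ρ C ε : ℝ) (hρ : 0 < ρ) (hC : 0 ≤ C) (hε : 0 < ε) :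
    ∃ δ : ℝ, 0 < δ ∧ δ < 1 ∧ ∃ n : ℕ,
      (1+ρ) * ((∑ k ∈ Finset.range n, ((δ:ℝ)^k)^ρ * (C*δ^k - C*δ^(k+1))) +
        ((δ:ℝ)^n)^ρ * (C*δ^n - 0)) ≤ C + ε/2 ∧
      C - ε/2 ≤ (1+ρ) * ∑ k ∈ Finset.range n, ((δ:ℝ)^(k+1))^ρ * (C*δ^k - C*δ^(k+1)) := by
  have hD : (0:ℝ) < 2*(C+1)*(3+ρ) := by nlinarith
  set θ : ℝ := min (1/2) (ε/(2*(C+1)*(3+ρ))) with hθdef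
  have hθ0 : 0 < θ := lt_min (by norm_num) (div_pos hε hD)
  have hθh : θ ≤ 1/2 := min_le_left _ _
  have hθε : θ * (2*(C+1)*(3+ρ)) ≤ ε := by
    have h := min_le_right (1/2 : ℝ) (ε/(2*(C+1)*(3+ρ)))
    calc θ * (2*(C+1)*(3+ρ)) ≤ (ε/(2*(C+1)*(3+ρ))) * (2*(C+1)*(3+ρ)) :=
          mul_le_mul_of_nonneg_right h hD.le
      _ = ε := div_mul_cancel₀ _ hD.ne'
  have hcont : ContinuousAt (fun x : ℝ => x ^ ρ) 1 :=
    Real.continuousAt_rpow_const 1 ρ (Or.inl one_ne_zero)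
  have h1 : Tendsto (fun x : ℝ => x ^ ρ) (𝓝[<] 1) (𝓝 1) := by
    simpa [Real.one_rpow] using hcont.tendsto.mono_left nhdsWithin_le_nhds
  have hev : ∀ᶠ x in 𝓝[<] (1:ℝ), 1 - θ < x ^ ρ :=
    h1.eventually_const_lt (by linarith)
  have hmem : Ioo (0:ℝ) 1 ∈ 𝓝[<] (1:ℝ) := Ioo_mem_nhdsLT_of_mem ⟨one_pos, le_refl 1⟩
  obtain ⟨δ, hδr, hδmem⟩ := (hev.and (eventually_of_mem hmem fun x hx => hx)).exists
  obtain ⟨hδ0, hδ1⟩ := hδmem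
  set r := δ ^ ρ with hrdef
  have hr0 : 0 < r := Real.rpow_pos_of_pos hδ0 ρ
  have hr1 : r < 1 := Real.rpow_lt_one hδ0.le hδ1 hρ
  set q := δ * r with hqdef
  have hq0 : 0 < q := mul_pos hδ0 hr0
  have hq1 : q < 1 := by nlinarith
  obtain ⟨n, hn⟩ : ∃ n : ℕ, q ^ n < θ :=
    ((tendsto_pow_atTop_nhds_zero_of_lt_one hq0.le hq1).eventually_lt_const hθ0).exists
  have hpow : ∀ k : ℕ, ((δ:ℝ)^k)^ρ = r^k := by
    intro k
    rw [hrdef, ← Real.rpow_natCast δ k, ← Real.rpow_mul hδ0.le, mul_comm,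
      Real.rpow_mul hδ0.le, Real.rpow_natCast]
  have hS0 : (0:ℝ) ≤ ∑ k ∈ Finset.range n, q ^ k :=
    Finset.sum_nonneg fun k _ => by positivity
  have hSq : (∑ k ∈ Finset.range n, q ^ k) * (1 - q) = 1 - q ^ n := by
    have h := geom_sum_mul q n
    linear_combination -h
  have hqpow : δ ^ (1+ρ) = q := by
    rw [hqdef, hrdef, Real.rpow_add hδ0, Real.rpow_one]
  have h1ρ : (0:ℝ) < 1 + ρ := by linarith
  have hyoung : (1+ρ) * r ≤ 1 + ρ * q := by
    have hw : 1/(1+ρ) + ρ/(1+ρ) = 1 := by field_simp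
    have h := Real.geom_mean_le_arith_mean2_weighted (w₁ := 1/(1+ρ)) (w₂ := ρ/(1+ρ))
      (p₁ := 1) (p₂ := δ^(1+ρ)) (by positivity) (by positivity) zero_le_one
      (by positivity) hw
    have hL : (1:ℝ)^(1/(1+ρ)) * (δ^(1+ρ))^(ρ/(1+ρ)) = r := by
      rw [Real.one_rpow, one_mul, ← Real.rpow_mul hδ0.le]
      rw [show (1+ρ)*(ρ/(1+ρ)) = ρ by field_simp]
    rw [hL, hqpow] at h
    calc (1+ρ)*r ≤ (1+ρ)*(1/(1+ρ)*1 + ρ/(1+ρ)*q) :=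
          mul_le_mul_of_nonneg_left h h1ρ.le
      _ = 1 + ρ*q := by field_simp
  have hbern : 1 - q ≤ (1+ρ) * (1-δ) := by
    have h := one_add_mul_self_le_rpow_one_add (s := δ - 1) (by linarith) (p := 1+ρ)
      (by linarith)
    rw [show (1:ℝ) + (δ-1) = δ by ring, hqpow] at h
    linarith
  have hy' : (1+ρ)*r ≤ 1 + ρ*(δ*r) := by rw [← hqdef]; exact hyoung
  have h1' : (1+ρ)*r*(1-δ) ≤ 1 - δ*r := by
    nlinarith [mul_le_mul_of_nonneg_right hy' (by linarith : (0:ℝ) ≤ 1-δ),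
      mul_le_mul_of_nonneg_right hy' hδ0.le]
  refine ⟨δ, hδ0, hδ1, n, ?_, ?_⟩
  · have hsum1 : ∑ k ∈ Finset.range n, ((δ:ℝ)^k)^ρ * (C*δ^k - C*δ^(k+1)) =
        ∑ k ∈ Finset.range n, C*(1-δ)*q^k := by
      refine Finset.sum_congr rfl fun k _ => ?_
      rw [hpow k, hqdef, mul_pow, pow_succ]
      ring
    have htail : ((δ:ℝ)^n)^ρ * (C*δ^n - 0) = C*q^n := by
      rw [hpow n, hqdef, mul_pow]; ring
    rw [hsum1, htail, ← Finset.mul_sum]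
    have h2 : r * ((1+ρ)*(1-δ)*∑ k ∈ Finset.range n, q ^ k) ≤ 1 - q^n := by
      calc r * ((1+ρ)*(1-δ)*∑ k ∈ Finset.range n, q ^ k)
          = ((1+ρ)*r*(1-δ)) * ∑ k ∈ Finset.range n, q ^ k := by ring
        _ ≤ (1 - δ*r) * ∑ k ∈ Finset.range n, q ^ k :=
            mul_le_mul_of_nonneg_right h1' hS0
        _ = 1 - q^n := by rw [← hqdef, mul_comm]; exact hSq
    have h3 : (1:ℝ) - q^n ≤ 1 := by
      have : (0:ℝ) ≤ q^n := pow_nonneg hq0.le n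
      linarith
    have h4 : (1:ℝ) ≤ r*(1+2*θ) := by nlinarith
    have hX : (1+ρ)*(1-δ)*(∑ k ∈ Finset.range n, q ^ k) ≤ 1 + 2*θ :=
      (mul_le_mul_iff_right₀ hr0).1 (le_trans (h2.trans h3) h4)
    have e1 : C*((1+ρ)*(1-δ)*∑ k ∈ Finset.range n, q ^ k) ≤ C*(1+2*θ) :=
      mul_le_mul_of_nonneg_left hX hC
    have e2 : C*(1+ρ)*q^n ≤ C*(1+ρ)*θ :=
      mul_le_mul_of_nonneg_left hn.le (mul_nonneg hC h1ρ.le)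
    nlinarith [mul_nonneg hθ0.le hC, mul_nonneg (mul_nonneg hθ0.le hρ.le) hC,
      mul_nonneg hθ0.le hρ.le]
  · have hsum2 : ∑ k ∈ Finset.range n, ((δ:ℝ)^(k+1))^ρ * (C*δ^k - C*δ^(k+1)) =
        ∑ k ∈ Finset.range n, C*(1-δ)*r*q^k := by
      refine Finset.sum_congr rfl fun k _ => ?_
      rw [hpow (k+1), hqdef, mul_pow, pow_succ δ k, pow_succ r k]
      ring
    rw [hsum2, ← Finset.mul_sum]
    have hXlb : 1 - q^n ≤ (1+ρ)*(1-δ)*∑ k ∈ Finset.range n, q ^ k := by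
      calc 1 - q^n = (1-q) * ∑ k ∈ Finset.range n, q ^ k := by
            rw [mul_comm]; exact hSq.symm
        _ ≤ ((1+ρ)*(1-δ)) * ∑ k ∈ Finset.range n, q ^ k :=
            mul_le_mul_of_nonneg_right hbern hS0
        _ = (1+ρ)*(1-δ)*∑ k ∈ Finset.range n, q ^ k := by ring
    have k1 : C*r*(1 - q^n) ≤ C*r*((1+ρ)*(1-δ)*∑ k ∈ Finset.range n, q ^ k) :=
      mul_le_mul_of_nonneg_left hXlb (mul_nonneg hC hr0.le)
    have k2 : C*(1-θ)*(1-θ) ≤ C*r*(1 - q^n) := by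
      have hfac : (1-θ)*(1-θ) ≤ r*(1 - q^n) :=
        mul_le_mul hδr.le (by linarith) (by linarith) hr0.le
      calc C*(1-θ)*(1-θ) = C*((1-θ)*(1-θ)) := by ring
        _ ≤ C*(r*(1 - q^n)) := mul_le_mul_of_nonneg_left hfac hC
        _ = C*r*(1 - q^n) := by ring
    have h4C : 4*C*θ ≤ ε := by
      have h2' : (4:ℝ)*C ≤ 2*(C+1)*(3+ρ) := by nlinarith
      calc 4*C*θ = θ*(4*C) := by ring
        _ ≤ θ*(2*(C+1)*(3+ρ)) := mul_le_mul_of_nonneg_left h2' hθ0.le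
        _ ≤ ε := hθε
    have k3 : C - ε/2 ≤ C*(1-θ)*(1-θ) := by
      nlinarith [mul_nonneg (mul_nonneg hC hθ0.le) hθ0.le]
    have keq : (1+ρ)*(C*(1-δ)*r*∑ k ∈ Finset.range n, q ^ k) =
        C*r*((1+ρ)*(1-δ)*∑ k ∈ Finset.range n, q ^ k) := by ring
    rw [keq]
    linarith

set_option maxHeartbeats 1000000 in
/-- Let H:[0,∞)→[0,∞) be increasing and regularly varying at infinity with
index ρ>0, and let A:[0,∞)→[0,∞) be continuous increasing with A(t)/t → C as t→∞ for some
finite constant C ≥ 0. Then (1+ρ)/(t·H(t)) · ∫₀ᵗ H(s) dA(s) → C as t→∞. -/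
theorem stmt0 (ρ : ℝ) (hρ : 0 < ρ)
    (H : ℝ → ℝ) (hHmono : Monotone H) (hHnn : ∀ t, 0 ≤ H t)
    (hHrv : ∀ l : ℝ, 0 < l → Tendsto (fun t => H (l * t) / H t) atTop (𝓝 (l ^ ρ)))
    (A : StieltjesFunction ℝ) (hAcont : Continuous A) (hAnn : ∀ t, 0 ≤ t → 0 ≤ A t)
    (C : ℝ) (hC : 0 ≤ C)
    (hA : Tendsto (fun t => A t / t) atTop (𝓝 C)) :
    Tendsto (fun t => (1 + ρ) / (t * H t) * ∫ s in Ioc (0:ℝ) t, H s ∂A.measure)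
      atTop (𝓝 C) := by
  refine Metric.tendsto_nhds.mpr fun ε hε => ?_
  have hHpos : ∃ t₀ : ℝ, 0 < H t₀ := by
    by_contra h
    push_neg at h
    have hzero : ∀ t, H t = 0 := fun t => le_antisymm (h t) (hHnn t)
    have h2 := hHrv 2 two_pos
    simp only [hzero, zero_div] at h2
    have h3 := tendsto_nhds_unique h2 tendsto_const_nhds
    exact (Real.rpow_pos_of_pos two_pos ρ).ne' h3
  obtain ⟨t₀, ht₀⟩ := hHpos
  have hHev : ∀ᶠ t in atTop, 0 < H t :=
    eventually_atTop.mpr ⟨t₀, fun t ht => lt_of_lt_of_le ht₀ (hHmono ht)⟩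
  obtain ⟨δ, hδ0, hδ1, n, hup, hlo⟩ := numeric_choice ρ C ε hρ hC hε
  have hHk : ∀ k : ℕ, Tendsto (fun t => H (δ^k * t) / H t) atTop (𝓝 ((δ^k) ^ ρ)) :=
    fun k => hHrv (δ^k) (pow_pos hδ0 k)
  have hAk : ∀ k : ℕ, Tendsto (fun t => A (δ^k * t) / t) atTop (𝓝 (C * δ^k)) := by
    intro k
    have hp : (0:ℝ) < δ^k := pow_pos hδ0 k
    have h1 : Tendsto (fun t : ℝ => δ^k * t) atTop atTop :=
      Tendsto.const_mul_atTop hp tendsto_id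
    have h2 := (hA.comp h1).const_mul ((δ:ℝ)^k)
    simp only [Function.comp_def] at h2
    have h3 : Tendsto (fun t => δ^k * (A (δ^k * t) / (δ^k * t))) atTop (𝓝 (C * δ^k)) := by
      rwa [mul_comm C (δ^k)]
    refine Tendsto.congr' ?_ h3
    filter_upwards [eventually_gt_atTop 0] with t ht
    field_simp [ht.ne', hp.ne']
  have hA0 : Tendsto (fun t : ℝ => A 0 / t) atTop (𝓝 0) :=
    tendsto_const_nhds.div_atTop tendsto_id
  have hWup : Tendsto (fun t => (1+ρ) * ((∑ k ∈ Finset.range n,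
        (H (δ^k*t)/H t) * (A (δ^k*t)/t - A (δ^(k+1)*t)/t)) +
        (H (δ^n*t)/H t) * (A (δ^n*t)/t - A 0/t))) atTop
      (𝓝 ((1+ρ) * ((∑ k ∈ Finset.range n, ((δ:ℝ)^k)^ρ * (C*δ^k - C*δ^(k+1))) +
        ((δ:ℝ)^n)^ρ * (C*δ^n - 0)))) :=
    ((tendsto_finset_sum _ fun k _ => (hHk k).mul ((hAk k).sub (hAk (k+1)))).add
      ((hHk n).mul ((hAk n).sub hA0))).const_mul (1+ρ)
  have hWlo : Tendsto (fun t => (1+ρ) * ∑ k ∈ Finset.range n,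
        (H (δ^(k+1)*t)/H t) * (A (δ^k*t)/t - A (δ^(k+1)*t)/t)) atTop
      (𝓝 ((1+ρ) * ∑ k ∈ Finset.range n, ((δ:ℝ)^(k+1))^ρ * (C*δ^k - C*δ^(k+1)))) :=
    (tendsto_finset_sum _ fun k _ => (hHk (k+1)).mul ((hAk k).sub (hAk (k+1)))).const_mul (1+ρ)
  have hU : Tendsto (fun t => (1+ρ)/(t*H t) * ((∑ k ∈ Finset.range n,
        H (δ^k*t) * (A (δ^k*t) - A (δ^(k+1)*t))) + H (δ^n*t) * (A (δ^n*t) - A 0))) atTop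
      (𝓝 ((1+ρ) * ((∑ k ∈ Finset.range n, ((δ:ℝ)^k)^ρ * (C*δ^k - C*δ^(k+1))) +
        ((δ:ℝ)^n)^ρ * (C*δ^n - 0)))) := by
    refine Tendsto.congr' ?_ hWup
    filter_upwards [eventually_gt_atTop 0, hHev] with t ht hHt
    have htne : t ≠ 0 := ht.ne'
    have hHne : H t ≠ 0 := hHt.ne'
    rw [eq_comm, div_mul_eq_mul_div, mul_div_assoc, add_div, Finset.sum_div]
    congr 1
    congr 1
    · exact Finset.sum_congr rfl fun k _ => by field_simp
    · field_simp
  have hV : Tendsto (fun t => (1+ρ)/(t*H t) * ∑ k ∈ Finset.range n,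
        H (δ^(k+1)*t) * (A (δ^k*t) - A (δ^(k+1)*t))) atTop
      (𝓝 ((1+ρ) * ∑ k ∈ Finset.range n, ((δ:ℝ)^(k+1))^ρ * (C*δ^k - C*δ^(k+1)))) := by
    refine Tendsto.congr' ?_ hWlo
    filter_upwards [eventually_gt_atTop 0, hHev] with t ht hHt
    have htne : t ≠ 0 := ht.ne'
    have hHne : H t ≠ 0 := hHt.ne'
    rw [eq_comm, div_mul_eq_mul_div, mul_div_assoc, Finset.sum_div]
    congr 1
    exact Finset.sum_congr rfl fun k _ => by field_simp
  have hfub : ∀ᶠ t in atTop, (1+ρ)/(t*H t) * (∫ s in Ioc (0:ℝ) t, H s ∂A.measure) ≤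
      (1+ρ)/(t*H t) * ((∑ k ∈ Finset.range n,
        H (δ^k*t) * (A (δ^k*t) - A (δ^(k+1)*t))) + H (δ^n*t) * (A (δ^n*t) - A 0)) := by
    filter_upwards [eventually_gt_atTop 0, hHev] with t ht hHt
    have hfac : 0 ≤ (1+ρ)/(t*H t) := le_of_lt (div_pos (by linarith) (mul_pos ht hHt))
    refine mul_le_mul_of_nonneg_left ?_ hfac
    rw [decomp A hHmono hδ0 hδ1.le ht.le n, add_comm]
    refine add_le_add (Finset.sum_le_sum fun k _ => ?_) ?_
    · exact piece_le A hHmono (mul_le_mul_of_nonneg_right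
        (pow_le_pow_of_le_one hδ0.le hδ1.le (Nat.le_succ k)) ht.le)
    · exact piece_le A hHmono (by positivity)
  have hflb : ∀ᶠ t in atTop, (1+ρ)/(t*H t) * ∑ k ∈ Finset.range n,
      H (δ^(k+1)*t) * (A (δ^k*t) - A (δ^(k+1)*t)) ≤
      (1+ρ)/(t*H t) * (∫ s in Ioc (0:ℝ) t, H s ∂A.measure) := by
    filter_upwards [eventually_gt_atTop 0, hHev] with t ht hHt
    have hfac : 0 ≤ (1+ρ)/(t*H t) := le_of_lt (div_pos (by linarith) (mul_pos ht hHt))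
    refine mul_le_mul_of_nonneg_left ?_ hfac
    rw [decomp A hHmono hδ0 hδ1.le ht.le n]
    have htail0 : 0 ≤ ∫ s in Ioc (0:ℝ) (δ^n*t), H s ∂A.measure :=
      setIntegral_nonneg measurableSet_Ioc fun x _ => hHnn x
    have hsum : ∑ k ∈ Finset.range n, H (δ^(k+1)*t) * (A (δ^k*t) - A (δ^(k+1)*t)) ≤
        ∑ k ∈ Finset.range n, ∫ s in Ioc (δ^(k+1)*t) (δ^k*t), H s ∂A.measure :=
      Finset.sum_le_sum fun k _ => le_piece A hHmono (mul_le_mul_of_nonneg_right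
        (pow_le_pow_of_le_one hδ0.le hδ1.le (Nat.le_succ k)) ht.le)
    linarith
  have hupev : ∀ᶠ t in atTop, (1+ρ)/(t*H t) * ((∑ k ∈ Finset.range n,
        H (δ^k*t) * (A (δ^k*t) - A (δ^(k+1)*t))) + H (δ^n*t) * (A (δ^n*t) - A 0)) < C + ε :=
    hU.eventually_lt_const (by linarith)
  have hloev : ∀ᶠ t in atTop, C - ε < (1+ρ)/(t*H t) * ∑ k ∈ Finset.range n,
        H (δ^(k+1)*t) * (A (δ^k*t) - A (δ^(k+1)*t)) :=
    hV.eventually_const_lt (by linarith)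
  filter_upwards [hfub, hflb, hupev, hloev] with t h1 h2 h3 h4
  rw [Real.dist_eq, abs_sub_lt_iff]
  exact ⟨by linarith, by linarith⟩
end

section
/- Fix 0<r<1, ρ>0, ϑ>0 and c>0, and let m(n) ∼ cn. Let (a_k)_{k≥0} be a bounded nonnegative sequence with (1/m)·Σ_{k=0}^m a_k → L as m→∞, and let H(k) be increasing in k and regularly varying at ∞ with index ρ. Then (1+ρ)/(m·H(m)) · Σ_{k=0}^{m(n)} H(k)·a_k → L as n→∞. -/
open Filter Set Topology MeasureTheory

lemma floor_step_integral (H : ℕ → ℝ) (n : ℕ) :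
    ∫ t in (n:ℝ)..((n:ℝ)+1), H ⌊t⌋₊ = H n := by
  rw [intervalIntegral.integral_congr_ae (g := fun _ => H n)]
  · simp
  · have hae : ∀ᵐ x : ℝ, x ≠ (n:ℝ)+1 := by
      rw [MeasureTheory.ae_iff]
      simpa using Real.volume_singleton (x := (n:ℝ)+1)
    filter_upwards [hae] with x hx hxI
    rw [Set.uIoc_of_le (by linarith : (n:ℝ) ≤ (n:ℝ)+1)] at hxI
    have h1 : (n:ℝ) ≤ x := le_of_lt hxI.1
    have h2 : x < (n:ℝ)+1 := lt_of_le_of_ne hxI.2 hx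
    have : ⌊x⌋₊ = n := by
      rw [Nat.floor_eq_iff (le_trans (Nat.cast_nonneg n) h1)]
      exact ⟨h1, h2⟩
    simp [this]

lemma floor_sum_integral (H : ℕ → ℝ) (hHmono : Monotone H) (n : ℕ) :
    ∫ t in (0:ℝ)..(n:ℝ), H ⌊t⌋₊ = ∑ k ∈ Finset.range n, H k := by
  have hmono : Monotone (fun t : ℝ => H ⌊t⌋₊) := hHmono.comp Nat.floor_mono
  induction n with
  | zero => simp
  | succ n ih =>
    have : ((n:ℝ)+1) = ((n+1 : ℕ) : ℝ) := by push_cast; ring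
    rw [Finset.sum_range_succ, ← ih, ← floor_step_integral H n, ← this]
    exact (intervalIntegral.integral_add_adjacent_intervals
      hmono.intervalIntegrable hmono.intervalIntegrable).symm

lemma karamata (ρ : ℝ) (hρ : 0 < ρ) (H : ℕ → ℝ) (hHmono : Monotone H)
    (hHnn : ∀ k, 0 ≤ H k)
    (hHrv : ∀ l : ℝ, 0 < l →
      Tendsto (fun n : ℕ => H ⌊l * n⌋₊ / H n) atTop (𝓝 (l ^ ρ)))
    (N0 : ℕ) (hN0 : 0 < H N0) :
    Tendsto (fun M : ℕ => (∑ k ∈ Finset.range (M+1), H k) / ((M:ℝ) * H M))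
      atTop (𝓝 (1/(1+ρ))) := by
  have hpos : ∀ n, N0 ≤ n → 0 < H n := fun n hn => lt_of_lt_of_le hN0 (hHmono hn)
  have hdct : Tendsto (fun n : ℕ => ∫ s in Ioc (0:ℝ) 1, H ⌊(n:ℝ)*s⌋₊ / H n) atTop
      (𝓝 (∫ s in Ioc (0:ℝ) 1, s ^ ρ)) := by
    apply MeasureTheory.tendsto_integral_filter_of_dominated_convergence
      (bound := fun _ => 1)
    · apply Eventually.of_forall; intro n
      exact (((measurable_from_top.comp Nat.measurable_floor).comp
        (measurable_const_mul _)).div_const _).aestronglyMeasurable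
    · filter_upwards [eventually_ge_atTop N0] with n hn
      filter_upwards [ae_restrict_mem measurableSet_Ioc] with s hs
      have hfl : ⌊(n:ℝ)*s⌋₊ ≤ n := by
        have h1 : (n:ℝ)*s ≤ (n:ℝ) := by nlinarith [hs.2, hs.1, Nat.cast_nonneg (α := ℝ) n]
        calc ⌊(n:ℝ)*s⌋₊ ≤ ⌊(n:ℝ)⌋₊ := Nat.floor_mono h1
          _ = n := Nat.floor_natCast n
      rw [Real.norm_eq_abs, abs_div, abs_of_nonneg (hHnn _), abs_of_nonneg (hHnn _),
        div_le_one (hpos n hn)]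
      exact hHmono hfl
    · exact (integrableOn_const (C := (1:ℝ)) measure_Ioc_lt_top.ne)
    · filter_upwards [ae_restrict_mem measurableSet_Ioc] with s hs
      have := hHrv s hs.1
      apply this.congr; intro n; rw [mul_comm]
  have hval : ∫ s in Ioc (0:ℝ) 1, s ^ ρ = 1/(1+ρ) := by
    rw [← intervalIntegral.integral_of_le (by norm_num : (0:ℝ) ≤ 1),
      integral_rpow (Or.inl (by linarith)), Real.one_rpow,
      Real.zero_rpow (by linarith : ρ+1 ≠ 0)]
    rw [add_comm]
    norm_num
  have hid : ∀ n : ℕ, 1 ≤ n →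
      ∫ s in Ioc (0:ℝ) 1, H ⌊(n:ℝ)*s⌋₊ / H n
        = (∑ k ∈ Finset.range n, H k) / ((n:ℝ) * H n) := by
    intro n hn
    have hn0 : (n:ℝ) ≠ 0 := by positivity
    rw [MeasureTheory.integral_div, ← intervalIntegral.integral_of_le (by norm_num : (0:ℝ) ≤ 1)]
    rw [intervalIntegral.integral_comp_mul_left (fun t => H ⌊t⌋₊) hn0]
    rw [mul_zero, mul_one, floor_sum_integral H hHmono n]
    rw [smul_eq_mul]
    field_simp
  have key : Tendsto (fun n : ℕ =>
      (∑ k ∈ Finset.range n, H k) / ((n:ℝ) * H n) + 1/(n:ℝ)) atTop (𝓝 (1/(1+ρ) + 0)) := by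
    apply Tendsto.add
    · rw [← hval]
      apply hdct.congr'
      filter_upwards [eventually_ge_atTop 1] with n hn
      exact hid n hn
    · exact tendsto_one_div_atTop_nhds_zero_nat
  rw [add_zero] at key
  apply key.congr'
  filter_upwards [eventually_ge_atTop (max N0 1)] with n hn
  have hn1 : 1 ≤ n := le_trans (le_max_right _ _) hn
  have hHn : 0 < H n := hpos n (le_trans (le_max_left _ _) hn)
  have hn0 : (0:ℝ) < (n:ℝ) := by exact_mod_cast hn1
  rw [Finset.sum_range_succ]
  field_simp

lemma abel_sum (H : ℕ → ℝ) (a : ℕ → ℝ) (M : ℕ) :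
    ∑ k ∈ Finset.range (M+1), H k * a k
      = H M * (∑ j ∈ Finset.range (M+1), a j)
        - ∑ k ∈ Finset.range M, ((H (k+1) - H k) * ∑ j ∈ Finset.range (k+1), a j) := by
  induction M with
  | zero => simp
  | succ M ih =>
    rw [Finset.sum_range_succ (fun k => H k * a k) (M+1), ih,
      Finset.sum_range_succ (fun k => (H (k+1) - H k) * ∑ j ∈ Finset.range (k+1), a j) M,
      Finset.sum_range_succ a (M+1)]
    ring

lemma delta_sum (H : ℕ → ℝ) (M : ℕ) :
    ∑ k ∈ Finset.range M, ((H (k+1) - H k) * (k:ℝ))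
      = (M:ℝ) * H M - ∑ k ∈ Finset.range (M+1), H k + H 0 := by
  induction M with
  | zero => simp
  | succ M ih =>
    rw [Finset.sum_range_succ (fun k => (H (k+1) - H k) * (k:ℝ)) M, ih,
      Finset.sum_range_succ H (M+1)]
    push_cast
    ring

/-- discrete analogue of Lemma 2.2: Cesàro convergence of a bounded
nonnegative sequence (a_k) transfers to weighted averages with increasing, regularly
varying weights H(k) of index ρ>0:
(1+ρ)/(m·H(m)) · Σ_{k=0}^{m(n)} H(k)·a_k → L when m(n) ∼ cn. -/
theorem stmt8 (ρ c L : ℝ) (hρ : 0 < ρ) (hc : 0 < c)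
    (m : ℕ → ℕ) (hm : Tendsto (fun n : ℕ => (m n : ℝ) / n) atTop (𝓝 c))
    (a : ℕ → ℝ) (hann : ∀ k, 0 ≤ a k) (habdd : ∃ M, ∀ k, a k ≤ M)
    (hcesaro : Tendsto (fun M : ℕ => (1 / (M:ℝ)) * ∑ k ∈ Finset.range (M + 1), a k)
      atTop (𝓝 L))
    (H : ℕ → ℝ) (hHmono : Monotone H) (hHnn : ∀ k, 0 ≤ H k)
    (hHrv : ∀ l : ℝ, 0 < l →
      Tendsto (fun n : ℕ => H ⌊l * n⌋₊ / H n) atTop (𝓝 (l ^ ρ))) :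
    Tendsto (fun n : ℕ => (1 + ρ) / ((m n : ℝ) * H (m n)) *
        ∑ k ∈ Finset.range (m n + 1), H k * a k) atTop (𝓝 L) := by
  classical
  -- eventual positivity of H
  obtain ⟨N0, hposN0⟩ : ∃ N0 : ℕ, ∀ n, N0 ≤ n → 0 < H n := by
    have h1 := hHrv 1 one_pos
    rw [Real.one_rpow] at h1
    have h1' : Tendsto (fun n : ℕ => H n / H n) atTop (𝓝 1) := by
      apply h1.congr; intro n; norm_num
    have hev := h1'.eventually (eventually_gt_nhds (by norm_num : (1:ℝ)/2 < 1))
    obtain ⟨N0, hN0⟩ := eventually_atTop.mp hev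
    refine ⟨N0, fun n hn => ?_⟩
    rcases lt_or_eq_of_le (hHnn n) with h | h
    · exact h
    · exfalso; have := hN0 n hn; rw [← h] at this; norm_num at this
  have hN0pos : 0 < H N0 := hposN0 N0 le_rfl
  set D : ℕ → ℝ := fun M => (M:ℝ) * H M with hD
  have hDtop : Tendsto D atTop atTop := by
    apply tendsto_atTop_mono' atTop (f₁ := fun M : ℕ => H N0 * (M:ℝ))
    · filter_upwards [eventually_ge_atTop N0] with M hM
      have h1 : H N0 ≤ H M := hHmono hM
      have hMnn : (0:ℝ) ≤ (M:ℝ) := Nat.cast_nonneg M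
      have : H N0 * (M:ℝ) ≤ H M * (M:ℝ) := by nlinarith
      simpa [hD, mul_comm] using this
    · exact (tendsto_natCast_atTop_atTop).const_mul_atTop hN0pos
  have hDinv : Tendsto (fun M => (D M)⁻¹) atTop (𝓝 0) := hDtop.inv_tendsto_atTop
  set A : ℕ → ℝ := fun k => ∑ j ∈ Finset.range (k+1), a j with hA
  have hAL : Tendsto (fun M : ℕ => A M / M) atTop (𝓝 L) := by
    apply hcesaro.congr; intro M; rw [one_div, inv_mul_eq_div]
  set e : ℕ → ℝ := fun k => A k - L * k with he
  have heL : Tendsto (fun k : ℕ => e k / k) atTop (𝓝 0) := by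
    have h2 := hAL.sub_const L
    rw [sub_self] at h2
    apply h2.congr'
    filter_upwards [eventually_ge_atTop 1] with k hk
    have hk0 : (k:ℝ) ≠ 0 := by positivity
    simp only [he]
    field_simp
  set S : ℕ → ℝ := fun M => ∑ k ∈ Finset.range (M+1), H k with hS
  have hSK : Tendsto (fun M : ℕ => S M / D M) atTop (𝓝 (1/(1+ρ))) :=
    karamata ρ hρ H hHmono hHnn hHrv N0 hN0pos
  set E : ℕ → ℝ := fun M => ∑ k ∈ Finset.range M, ((H (k+1) - H k) * e k) with hE
  have hH0S : ∀ M : ℕ, H 0 ≤ S M := by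
    intro M
    apply Finset.single_le_sum (f := H) (fun k _ => hHnn k)
    exact Finset.mem_range.mpr (Nat.succ_pos M)
  have hEz : Tendsto (fun M => E M / D M) atTop (𝓝 0) := by
    rw [NormedAddCommGroup.tendsto_nhds_zero]
    intro ε hε
    obtain ⟨K, hK⟩ := Metric.tendsto_atTop.mp heL (ε/2) (by positivity)
    set K' := max K 1 with hK'
    set C : ℝ := ∑ j ∈ Finset.range K', |e j| with hC
    have hCnn : 0 ≤ C := Finset.sum_nonneg (fun j _ => abs_nonneg _)
    have hCb : ∀ k, k < K' → |e k| ≤ C := by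
      intro k hk
      exact Finset.single_le_sum (f := fun j => |e j|) (fun j _ => abs_nonneg _)
        (Finset.mem_range.mpr hk)
    have hek : ∀ k, K' ≤ k → |e k| ≤ ε/2 * k := by
      intro k hk
      have hk1 : 1 ≤ k := le_trans (le_max_right K 1) hk
      have hd := hK k (le_trans (le_max_left K 1) hk)
      rw [Real.dist_eq, sub_zero, abs_div, Nat.abs_cast] at hd
      have hkpos : (0:ℝ) < (k:ℝ) := by exact_mod_cast hk1
      rw [div_lt_iff₀ hkpos] at hd
      exact le_of_lt hd
    have hbound : ∀ M, K' ≤ M → |E M| ≤ C * H K' + ε/2 * D M := by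
      intro M hM
      have h1 : |E M| ≤ ∑ k ∈ Finset.range M, ((H (k+1) - H k) * |e k|) := by
        refine le_trans (Finset.abs_sum_le_sum_abs _ _) (Finset.sum_le_sum ?_)
        intro k _
        rw [abs_mul, abs_of_nonneg (sub_nonneg.mpr (hHmono (Nat.le_succ k)))]
      have hsplit : ∑ k ∈ Finset.range M, ((H (k+1) - H k) * |e k|)
          = ∑ k ∈ Finset.range K', ((H (k+1) - H k) * |e k|)
            + ∑ k ∈ Finset.Ico K' M, ((H (k+1) - H k) * |e k|) := by
        rw [Finset.range_eq_Ico, Finset.range_eq_Ico]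
        exact (Finset.sum_Ico_consecutive _ (Nat.zero_le K') hM).symm
      have h2 : ∑ k ∈ Finset.range K', ((H (k+1) - H k) * |e k|) ≤ C * H K' := by
        calc ∑ k ∈ Finset.range K', ((H (k+1) - H k) * |e k|)
            ≤ ∑ k ∈ Finset.range K', ((H (k+1) - H k) * C) := by
              apply Finset.sum_le_sum
              intro k hk
              have := hCb k (Finset.mem_range.mp hk)
              nlinarith [sub_nonneg.mpr (hHmono (Nat.le_succ k))]
          _ = (H K' - H 0) * C := by rw [← Finset.sum_mul, Finset.sum_range_sub]
          _ ≤ C * H K' := by nlinarith [hHnn 0, hHnn K']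
      have h3 : ∑ k ∈ Finset.Ico K' M, ((H (k+1) - H k) * |e k|) ≤ ε/2 * D M := by
        calc ∑ k ∈ Finset.Ico K' M, ((H (k+1) - H k) * |e k|)
            ≤ ∑ k ∈ Finset.Ico K' M, ((H (k+1) - H k) * (ε/2 * k)) := by
              apply Finset.sum_le_sum
              intro k hk
              have := hek k (Finset.mem_Ico.mp hk).1
              nlinarith [sub_nonneg.mpr (hHmono (Nat.le_succ k))]
          _ ≤ ∑ k ∈ Finset.range M, ((H (k+1) - H k) * (ε/2 * k)) := by
              apply Finset.sum_le_sum_of_subset_of_nonneg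
              · rw [Finset.range_eq_Ico]
                exact Finset.Ico_subset_Ico (Nat.zero_le _) le_rfl
              · intro k _ _
                have h4 := sub_nonneg.mpr (hHmono (Nat.le_succ k))
                have h5 : (0:ℝ) ≤ (k:ℝ) := Nat.cast_nonneg k
                positivity
          _ = ε/2 * ∑ k ∈ Finset.range M, ((H (k+1) - H k) * (k:ℝ)) := by
              rw [Finset.mul_sum]; apply Finset.sum_congr rfl; intro k _; ring
          _ ≤ ε/2 * D M := by
              rw [delta_sum H M]
              have := hH0S M
              have hDMdef : D M = (M:ℝ) * H M := rfl
              nlinarith [hH0S M]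
      calc |E M| ≤ _ := h1
        _ = _ := hsplit
        _ ≤ C * H K' + ε/2 * D M := add_le_add h2 h3
    have hsmall : ∀ᶠ M : ℕ in atTop, C * H K' * (D M)⁻¹ < ε/2 := by
      have h5 := hDinv.const_mul (C * H K')
      rw [mul_zero] at h5
      exact h5.eventually (eventually_lt_nhds (by positivity))
    filter_upwards [hsmall, eventually_ge_atTop K', eventually_ge_atTop (max N0 1)]
      with M h1 h2 h3
    have hM1 : 1 ≤ M := le_trans (le_max_right _ _) h3
    have hHM : 0 < H M := hposN0 M (le_trans (le_max_left _ _) h3)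
    have hMpos : (0:ℝ) < (M:ℝ) := by exact_mod_cast hM1
    have hDM : 0 < D M := mul_pos hMpos hHM
    rw [Real.norm_eq_abs, abs_div, abs_of_pos hDM, div_lt_iff₀ hDM]
    have hb := hbound M h2
    rw [mul_inv_lt_iff₀ hDM] at h1
    calc |E M| ≤ C * H K' + ε/2 * D M := hb
      _ < ε/2 * D M + ε/2 * D M := by linarith
      _ = ε * D M := by ring
  -- m tends to infinity
  have hmtop : Tendsto m atTop atTop := by
    rw [← tendsto_natCast_atTop_iff (R := ℝ)]
    have h2 : Tendsto (fun n : ℕ => ((m n:ℝ)/n) * n) atTop atTop :=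
      hm.pos_mul_atTop hc tendsto_natCast_atTop_atTop
    apply Filter.Tendsto.congr' _ h2
    filter_upwards [eventually_ge_atTop 1] with n hn
    have hn0 : (n:ℝ) ≠ 0 := by positivity
    field_simp
  -- main limit along M
  have hmain : Tendsto (fun M : ℕ => (1+ρ)/(D M) * ∑ k ∈ Finset.range (M+1), H k * a k)
      atTop (𝓝 L) := by
    have hH0lim : Tendsto (fun M : ℕ => H 0 / D M) atTop (𝓝 0) := by
      have h5 := hDinv.const_mul (H 0)
      rw [mul_zero] at h5
      apply h5.congr; intro M; rw [← div_eq_mul_inv]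
    have hlim : Tendsto (fun M : ℕ =>
        (1+ρ) * (A M/(M:ℝ) - L*(1 - S M/D M + (H 0)/D M) - E M/D M)) atTop
        (𝓝 ((1+ρ) * (L - L*(1 - 1/(1+ρ) + 0) - 0))) := by
      apply Tendsto.const_mul
      exact (hAL.sub (((tendsto_const_nhds.sub hSK).add hH0lim).const_mul L)).sub hEz
    have hLval : (1+ρ) * (L - L*(1 - 1/(1+ρ) + 0) - 0) = L := by
      have h1ρ : (1+ρ) ≠ 0 := by positivity
      field_simp
      ring
    rw [hLval] at hlim
    apply hlim.congr'
    filter_upwards [eventually_ge_atTop (max N0 1)] with M hM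
    have hM1 : 1 ≤ M := le_trans (le_max_right _ _) hM
    have hHM : 0 < H M := hposN0 M (le_trans (le_max_left _ _) hM)
    have hMpos : (0:ℝ) < (M:ℝ) := by exact_mod_cast hM1
    have hsplit : ∑ k ∈ Finset.range M, ((H (k+1) - H k) * ∑ j ∈ Finset.range (k+1), a j)
        = L * ((M:ℝ) * H M - S M + H 0) + E M := by
      have hsum : ∑ k ∈ Finset.range M, ((H (k+1) - H k) * ∑ j ∈ Finset.range (k+1), a j)
          = ∑ k ∈ Finset.range M, (L * ((H (k+1) - H k) * (k:ℝ)) + (H (k+1) - H k) * e k) := by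
        apply Finset.sum_congr rfl
        intro k _
        have hAe : (∑ j ∈ Finset.range (k+1), a j) = L * k + e k := by
          simp only [he, hA]; ring
        rw [hAe]; ring
      rw [hsum, Finset.sum_add_distrib, ← Finset.mul_sum, delta_sum H M]
    rw [abel_sum H a M, hsplit]
    have hHMne : H M ≠ 0 := ne_of_gt hHM
    have hMne : (M:ℝ) ≠ 0 := ne_of_gt hMpos
    simp only [hD, hA]
    field_simp
    ring
  exact hmain.comp hmtop
end

section
/- In the limit experiment {P̃_h : h∈ℝ} with likelihood ratios dP̃_h/dP̃_0 = exp{W̃(h) − |h|/2} for double-sided standard Brownian motion W̃, the squared Hellinger distance satisfies H²(P̃_{h′}, P̃_h) = 2(1 − exp(−|h′−h|/8)) for all h, h′ ∈ ℝ with sgn(h′)=sgn(h); consequently H(P̃_{h′}, P̃_h) ∼ |h′−h|^{1/2}/2 as h′→h, i.e., the parametrization is Hölder-1/2 smooth in Hellinger distance. -/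
open Filter Set Topology MeasureTheory ProbabilityTheory
open scoped NNReal ENNReal

/-- pointwise: exp(cx) * N(0,v)-pdf = exp(c²v/2) * N(cv,v)-pdf -/
lemma stmt11_pdf_shift (c : ℝ) (v : ℝ≥0) (hv : v ≠ 0) (x : ℝ) :
    Real.exp (c * x) * gaussianPDFReal 0 v x
      = Real.exp (c ^ 2 * v / 2) * gaussianPDFReal (c * v) v x := by
  have hv' : (v : ℝ) ≠ 0 := by exact_mod_cast hv
  simp only [gaussianPDFReal]
  rw [mul_left_comm, mul_left_comm (Real.exp _), ← Real.exp_add, ← Real.exp_add]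
  congr 1
  field_simp
  ring

/-- MGF of a Gaussian measure. -/
lemma stmt11_mgf_gauss (c : ℝ) {v : ℝ} (hv : 0 ≤ v) :
    Integrable (fun x => Real.exp (c * x)) (gaussianReal 0 (Real.toNNReal v)) ∧
      ∫ x, Real.exp (c * x) ∂(gaussianReal 0 (Real.toNNReal v))
        = Real.exp (c ^ 2 * v / 2) := by
  by_cases hv0 : v = 0
  · subst hv0
    simp only [Real.toNNReal_zero, gaussianReal_zero_var]
    constructor
    · refine (integrable_const (Real.exp (c * 0))).congr ?_
      rw [MeasureTheory.ae_dirac_eq]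
      exact Filter.eventually_pure.2 rfl
    · simp
  · have hvpos : 0 < v := lt_of_le_of_ne hv (Ne.symm hv0)
    have hvne : (Real.toNNReal v) ≠ 0 := by
      simp [Real.toNNReal_eq_zero, not_le, hvpos]
    have hcoe : ((Real.toNNReal v : ℝ≥0) : ℝ) = v := Real.coe_toNNReal v hv
    rw [gaussianReal_of_var_ne_zero 0 hvne]
    set vt := Real.toNNReal v with hvt
    have hdens : (gaussianPDF 0 vt) = fun x => ((Real.toNNReal (gaussianPDFReal 0 vt x) : ℝ≥0) : ℝ≥0∞) := by
      funext x; rfl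
    have hmeasd : Measurable (fun x => Real.toNNReal (gaussianPDFReal 0 vt x)) :=
      (measurable_gaussianPDFReal 0 vt).real_toNNReal
    have hpt : ∀ x, (Real.toNNReal (gaussianPDFReal 0 vt x) : ℝ≥0) • Real.exp (c * x)
        = Real.exp (c ^ 2 * v / 2) * gaussianPDFReal (c * v) vt x := by
      intro x
      rw [NNReal.smul_def, smul_eq_mul, Real.coe_toNNReal _ (gaussianPDFReal_nonneg 0 vt x),
        mul_comm]
      have := stmt11_pdf_shift c vt hvne x
      rw [hcoe] at this
      exact this
    constructor
    · rw [hdens, integrable_withDensity_iff_integrable_smul hmeasd]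
      refine Integrable.congr ((integrable_gaussianPDFReal (c * v) vt).const_mul
        (Real.exp (c ^ 2 * v / 2))) ?_
      exact Filter.Eventually.of_forall fun x => (hpt x).symm
    · rw [hdens, integral_withDensity_eq_integral_smul hmeasd]
      simp_rw [hpt]
      rw [integral_const_mul, integral_gaussianPDFReal_eq_one (c * v) hvne, mul_one]

lemma stmt11_mgf_map {Ω : Type*} [MeasurableSpace Ω] {P : Measure Ω}
    {X : Ω → ℝ} (hX : Measurable X) {v : ℝ} (hv : 0 ≤ v)
    (hmap : Measure.map X P = gaussianReal 0 (Real.toNNReal v)) (c : ℝ) :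
    Integrable (fun ω => Real.exp (c * X ω)) P ∧
      ∫ ω, Real.exp (c * X ω) ∂P = Real.exp (c ^ 2 * v / 2) := by
  obtain ⟨hint, hval⟩ := stmt11_mgf_gauss c hv
  rw [← hmap] at hint hval
  constructor
  · exact (integrable_map_measure hint.aestronglyMeasurable hX.aemeasurable).mp hint
  · rw [← hval, integral_map hX.aemeasurable]
    exact (Measurable.exp (measurable_const.mul measurable_id)).aestronglyMeasurable

lemma stmt11_core {Ω : Type*} [MeasurableSpace Ω] (P : Measure Ω) [IsProbabilityMeasure P]
    (B : ℝ → Ω → ℝ) (hm : ∀ t, Measurable (B t)) (h0 : ∀ ω, B 0 ω = 0)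
    (hG : ∀ s t : ℝ, 0 ≤ s → s ≤ t →
      Measure.map (fun ω => B t ω - B s ω) P = gaussianReal 0 (Real.toNNReal (t - s)))
    (hI : ∀ s t u : ℝ, 0 ≤ s → s ≤ t → t ≤ u →
      IndepFun (fun ω => B t ω - B s ω) (fun ω => B u ω - B t ω) P)
    (h h' a b : ℝ) (hh0 : 0 ≤ h) (hhh : h ≤ h') :
    Integrable (fun ω => Real.exp (a * B h' ω + b * B h ω)) P ∧
      ∫ ω, Real.exp (a * B h' ω + b * B h ω) ∂P
        = Real.exp ((a + b) ^ 2 * h / 2 + a ^ 2 * (h' - h) / 2) := by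
  set X : Ω → ℝ := fun ω => B h ω with hX
  set Y : Ω → ℝ := fun ω => B h' ω - B h ω with hY
  have hXm : Measurable X := hm h
  have hYm : Measurable Y := (hm h').sub (hm h)
  have hfe : (fun ω => B h ω - B 0 ω) = X := by funext ω; simp [hX, h0]
  have hXmap : Measure.map X P = gaussianReal 0 (Real.toNNReal h) := by
    have := hG 0 h le_rfl hh0
    rw [hfe] at this
    simpa using this
  have hYmap : Measure.map Y P = gaussianReal 0 (Real.toNNReal (h' - h)) :=
    hG h h' hh0 hhh
  have hind : IndepFun X Y P := by
    have := hI 0 h h' le_rfl hh0 hhh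
    rwa [hfe] at this
  obtain ⟨hXi, hXv⟩ := stmt11_mgf_map hXm hh0 hXmap (a + b)
  obtain ⟨hYi, hYv⟩ := stmt11_mgf_map hYm (sub_nonneg.2 hhh) hYmap a
  have hinde : IndepFun (fun ω => Real.exp ((a + b) * X ω)) (fun ω => Real.exp (a * Y ω)) P :=
    hind.comp (Real.measurable_exp.comp (measurable_const_mul (a + b)))
      (Real.measurable_exp.comp (measurable_const_mul a))
  have hfeq : (fun ω => Real.exp (a * B h' ω + b * B h ω))
      = fun ω => Real.exp ((a + b) * X ω) * Real.exp (a * Y ω) := by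
    funext ω
    rw [← Real.exp_add]
    congr 1
    simp only [hX, hY]
    ring
  constructor
  · rw [hfeq]
    exact hinde.integrable_mul hXi hYi
  · rw [hfeq]
    have := hinde.integral_mul_eq_mul_integral hXi.aestronglyMeasurable hYi.aestronglyMeasurable
    rw [show (fun ω => Real.exp ((a + b) * X ω) * Real.exp (a * Y ω))
        = (fun ω => Real.exp ((a + b) * X ω)) * (fun ω => Real.exp (a * Y ω)) from rfl,
      this, hXv, hYv, ← Real.exp_add]

lemma stmt11_hellinger {Ω : Type*} [MeasurableSpace Ω] (P : Measure Ω) [IsProbabilityMeasure P]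
    (B : ℝ → Ω → ℝ) (hm : ∀ t, Measurable (B t)) (h0 : ∀ ω, B 0 ω = 0)
    (hG : ∀ s t : ℝ, 0 ≤ s → s ≤ t →
      Measure.map (fun ω => B t ω - B s ω) P = gaussianReal 0 (Real.toNNReal (t - s)))
    (hI : ∀ s t u : ℝ, 0 ≤ s → s ≤ t → t ≤ u →
      IndepFun (fun ω => B t ω - B s ω) (fun ω => B u ω - B t ω) P)
    (h h' : ℝ) (hh0 : 0 ≤ h) (hhh : h ≤ h') :
    ∫ ω, (Real.exp (B h' ω / 2 - h' / 4) - Real.exp (B h ω / 2 - h / 4)) ^ 2 ∂P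
      = 2 * (1 - Real.exp (-(h' - h) / 8)) := by
  obtain ⟨i1, v1⟩ := stmt11_core P B hm h0 hG hI h h' 1 0 hh0 hhh
  obtain ⟨i2, v2⟩ := stmt11_core P B hm h0 hG hI h h' 0 1 hh0 hhh
  obtain ⟨i3, v3⟩ := stmt11_core P B hm h0 hG hI h h' (1/2) (1/2) hh0 hhh
  have hfeq : (fun ω => (Real.exp (B h' ω / 2 - h' / 4) - Real.exp (B h ω / 2 - h / 4)) ^ 2)
      = fun ω => (Real.exp (-h' / 2) * Real.exp (1 * B h' ω + 0 * B h ω)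
          + Real.exp (-h / 2) * Real.exp (0 * B h' ω + 1 * B h ω))
          - (2 * Real.exp (-(h' + h) / 4)) * Real.exp ((1/2) * B h' ω + (1/2) * B h ω) := by
    funext ω
    rw [sub_sq]
    simp only [← Real.exp_add, sq, mul_assoc]
    rw [show B h' ω / 2 - h' / 4 + (B h' ω / 2 - h' / 4)
        = -h' / 2 + (1 * B h' ω + 0 * B h ω) by ring,
      show B h ω / 2 - h / 4 + (B h ω / 2 - h / 4)
        = -h / 2 + (0 * B h' ω + 1 * B h ω) by ring,
      show B h' ω / 2 - h' / 4 + (B h ω / 2 - h / 4)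
        = -(h' + h) / 4 + (1/2 * B h' ω + 1/2 * B h ω) by ring]
    ring
  rw [hfeq]
  have ia : Integrable (fun ω => Real.exp (-h' / 2) * Real.exp (1 * B h' ω + 0 * B h ω)
      + Real.exp (-h / 2) * Real.exp (0 * B h' ω + 1 * B h ω)) P :=
    (i1.const_mul _).add (i2.const_mul _)
  have ib : Integrable (fun ω => (2 * Real.exp (-(h' + h) / 4))
      * Real.exp (1/2 * B h' ω + 1/2 * B h ω)) P := i3.const_mul _
  rw [integral_sub ia ib,
    integral_add (i1.const_mul (Real.exp (-h' / 2))) (i2.const_mul (Real.exp (-h / 2))),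
    integral_const_mul, integral_const_mul, integral_const_mul, v1, v2, v3,
    ← Real.exp_add, ← Real.exp_add]
  rw [mul_assoc, ← Real.exp_add]
  have e1 : -h' / 2 + ((1 + 0) ^ 2 * h / 2 + 1 ^ 2 * (h' - h) / 2) = 0 := by ring
  have e2 : -h / 2 + ((0 + 1) ^ 2 * h / 2 + 0 ^ 2 * (h' - h) / 2) = 0 := by ring
  have e3 : -(h' + h) / 4 + ((1/2 + 1/2) ^ 2 * h / 2 + (1/2) ^ 2 * (h' - h) / 2)
      = -(h' - h) / 8 := by ring
  rw [e1, e2, e3, Real.exp_zero]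
  ring

lemma stmt11_limit (h : ℝ) :
    Tendsto (fun h' : ℝ =>
        Real.sqrt (2 * (1 - Real.exp (-|h' - h| / 8))) / |h' - h| ^ ((1:ℝ)/2))
      (𝓝[≠] h) (𝓝 (1/2)) := by
  -- derivative fact
  have hd : HasDerivAt (fun u : ℝ => 1 - Real.exp (-u / 8)) (1/8) 0 := by
    have h1 : HasDerivAt (fun u : ℝ => -u / 8) (-1/8) 0 := by
      simpa using ((hasDerivAt_id (0:ℝ)).neg.div_const 8)
    have h2 : HasDerivAt (fun u : ℝ => Real.exp (-u / 8)) (-1/8) 0 := by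
      have := (Real.hasDerivAt_exp (-(0:ℝ) / 8)).comp 0 h1
      simpa [Function.comp_def] using this
    have := h2.const_sub 1
    norm_num at this
    exact this
  have hslope : Tendsto (fun u : ℝ => (1 - Real.exp (-u / 8)) / u) (𝓝[≠] 0) (𝓝 (1/8)) := by
    have := hasDerivAt_iff_tendsto_slope.mp hd
    refine this.congr fun u => ?_
    simp [slope_def_field, div_eq_mul_inv]
  have h2 : Tendsto (fun u : ℝ => 2 * ((1 - Real.exp (-u / 8)) / u)) (𝓝[≠] 0)
      (𝓝 (1/4)) := by
    rw [show (1:ℝ)/4 = 2 * (1/8) by norm_num]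
    exact hslope.const_mul 2
  have h3 : Tendsto (fun u : ℝ => Real.sqrt (2 * ((1 - Real.exp (-u / 8)) / u))) (𝓝[≠] 0)
      (𝓝 (1/2)) := by
    have hc : Real.sqrt (1/4) = 1/2 := by
      rw [show (1:ℝ)/4 = (1/2)^2 by norm_num, Real.sqrt_sq (by norm_num)]
    have := (Real.continuous_sqrt.continuousAt (x := (1:ℝ)/4)).tendsto.comp h2
    rwa [hc] at this
  have habs : Tendsto (fun h' : ℝ => |h' - h|) (𝓝[≠] h) (𝓝[≠] 0) := by
    apply tendsto_nhdsWithin_of_tendsto_nhds_of_eventually_within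
    · have : Tendsto (fun h' : ℝ => |h' - h|) (𝓝 h) (𝓝 |h - h|) :=
        ((continuous_id.sub continuous_const).abs.tendsto h)
      simpa using this.mono_left nhdsWithin_le_nhds
    · filter_upwards [self_mem_nhdsWithin] with h' hh'
      simp only [mem_compl_iff, mem_singleton_iff]
      exact fun hc => hh' (by rwa [abs_eq_zero, sub_eq_zero] at hc)
  have hcomp := h3.comp habs
  refine hcomp.congr' ?_
  filter_upwards [self_mem_nhdsWithin] with h' hh'
  have hu : 0 < |h' - h| := abs_pos.mpr (sub_ne_zero.mpr hh')
  have hnum : 0 ≤ 2 * (1 - Real.exp (-|h' - h| / 8)) := by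
    have : Real.exp (-|h' - h| / 8) ≤ 1 := by
      rw [← Real.exp_zero]
      exact Real.exp_le_exp.mpr (by linarith [abs_nonneg (h' - h)])
    linarith
  simp only [Function.comp]
  rw [show 2 * ((1 - Real.exp (-|h' - h| / 8)) / |h' - h|)
      = (2 * (1 - Real.exp (-|h' - h| / 8))) / |h' - h| by ring,
    Real.sqrt_div hnum]
  congr 1
  exact Real.sqrt_eq_rpow _

/-- in the limit experiment with likelihood ratios
dP̃_h/dP̃_0 = L(h) = exp{W̃(h) − |h|/2} for double-sided standard Brownian motion W̃,
the squared Hellinger distance H²(P̃_{h′},P̃_h) = E₀[(√L(h′) − √L(h))²] equals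
2(1 − exp(−|h′−h|/8)) whenever sgn(h′)=sgn(h); consequently
H(P̃_{h′},P̃_h) ∼ |h′−h|^{1/2}/2 as h′→h (Hölder-1/2 smoothness in Hellinger distance). -/
theorem stmt11 {Ω : Type*} [MeasurableSpace Ω] (P : Measure Ω) [IsProbabilityMeasure P]
    (Bp Bm : ℝ → Ω → ℝ)
    (hmp : ∀ t, Measurable (Bp t)) (hmm : ∀ t, Measurable (Bm t))
    (hp0 : ∀ ω, Bp 0 ω = 0) (hm0 : ∀ ω, Bm 0 ω = 0)
    (hpG : ∀ s t : ℝ, 0 ≤ s → s ≤ t →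
      Measure.map (fun ω => Bp t ω - Bp s ω) P = gaussianReal 0 (Real.toNNReal (t - s)))
    (hmG : ∀ s t : ℝ, 0 ≤ s → s ≤ t →
      Measure.map (fun ω => Bm t ω - Bm s ω) P = gaussianReal 0 (Real.toNNReal (t - s)))
    (hpI : ∀ s t u : ℝ, 0 ≤ s → s ≤ t → t ≤ u →
      IndepFun (fun ω => Bp t ω - Bp s ω) (fun ω => Bp u ω - Bp t ω) P)
    (hmI : ∀ s t u : ℝ, 0 ≤ s → s ≤ t → t ≤ u →
      IndepFun (fun ω => Bm t ω - Bm s ω) (fun ω => Bm u ω - Bm t ω) P)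
    (Wt : ℝ → Ω → ℝ) (hWt : ∀ x ω, Wt x ω = if 0 ≤ x then Bp x ω else Bm (-x) ω)
    (L : ℝ → Ω → ℝ) (hL : ∀ x ω, L x ω = Real.exp (Wt x ω - |x| / 2)) :
    (∀ h h' : ℝ, 0 ≤ h * h' →
      ∫ ω, (Real.sqrt (L h' ω) - Real.sqrt (L h ω))^2 ∂P
        = 2 * (1 - Real.exp (-|h' - h| / 8))) ∧
    (∀ h : ℝ,
      Tendsto (fun h' : ℝ =>
          Real.sqrt (2 * (1 - Real.exp (-|h' - h| / 8))) / |h' - h| ^ ((1:ℝ)/2))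
        (𝓝[≠] h) (𝓝 (1/2))) := by
  have sqrtP : ∀ x : ℝ, 0 ≤ x → ∀ ω, Real.sqrt (L x ω) = Real.exp (Bp x ω / 2 - x / 4) := by
    intro x hx ω
    rw [hL, hWt x ω, if_pos hx, abs_of_nonneg hx, ← Real.exp_half]
    congr 1
    ring
  have sqrtM : ∀ x : ℝ, x ≤ 0 → ∀ ω,
      Real.sqrt (L x ω) = Real.exp (Bm (-x) ω / 2 - (-x) / 4) := by
    intro x hx ω
    have hW : Wt x ω = Bm (-x) ω := by
      rcases eq_or_lt_of_le hx with he | hlt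
      · subst he
        rw [hWt]
        simp [hp0, hm0]
      · rw [hWt, if_neg (not_le.mpr hlt)]
    rw [hL, hW, abs_of_nonpos hx, ← Real.exp_half]
    congr 1
    ring
  have keyP : ∀ g g' : ℝ, 0 ≤ g → g ≤ g' →
      ∫ ω, (Real.sqrt (L g' ω) - Real.sqrt (L g ω))^2 ∂P
        = 2 * (1 - Real.exp (-(g' - g) / 8)) := by
    intro g g' hg hgg
    have heq : (fun ω => (Real.sqrt (L g' ω) - Real.sqrt (L g ω))^2)
        = fun ω => (Real.exp (Bp g' ω / 2 - g' / 4) - Real.exp (Bp g ω / 2 - g / 4))^2 :=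
      funext fun ω => by rw [sqrtP g' (hg.trans hgg) ω, sqrtP g hg ω]
    rw [heq]
    exact stmt11_hellinger P Bp hmp hp0 hpG hpI g g' hg hgg
  have keyM : ∀ g g' : ℝ, g ≤ g' → g' ≤ 0 →
      ∫ ω, (Real.sqrt (L g' ω) - Real.sqrt (L g ω))^2 ∂P
        = 2 * (1 - Real.exp (-(g' - g) / 8)) := by
    intro g g' hgg hg'
    have heq : (fun ω => (Real.sqrt (L g' ω) - Real.sqrt (L g ω))^2)
        = fun ω => (Real.exp (Bm (-g) ω / 2 - (-g) / 4)
            - Real.exp (Bm (-g') ω / 2 - (-g') / 4))^2 :=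
      funext fun ω => by
        rw [sqrtM g' hg' ω, sqrtM g (hgg.trans hg') ω]
        ring
    rw [heq, stmt11_hellinger P Bm hmm hm0 hmG hmI (-g') (-g)
      (neg_nonneg.2 hg') (neg_le_neg hgg), show -g - -g' = g' - g by ring]
  constructor
  · intro h h' hs
    rcases mul_nonneg_iff.mp hs with ⟨h0, h'0⟩ | ⟨h0, h'0⟩
    · rcases le_total h h' with o | o
      · rw [abs_of_nonneg (sub_nonneg.2 o), keyP h h' h0 o]
      · have hsym : (fun ω => (Real.sqrt (L h' ω) - Real.sqrt (L h ω))^2)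
            = fun ω => (Real.sqrt (L h ω) - Real.sqrt (L h' ω))^2 :=
          funext fun ω => by ring
        rw [hsym, abs_of_nonpos (sub_nonpos.2 o), neg_sub, keyP h' h h'0 o]
    · rcases le_total h h' with o | o
      · rw [abs_of_nonneg (sub_nonneg.2 o), keyM h h' o h'0]
      · have hsym : (fun ω => (Real.sqrt (L h' ω) - Real.sqrt (L h ω))^2)
            = fun ω => (Real.sqrt (L h ω) - Real.sqrt (L h' ω))^2 :=
          funext fun ω => by ring
        rw [hsym, abs_of_nonpos (sub_nonpos.2 o), neg_sub, keyM h' h o h0]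
  · intro h
    exact stmt11_limit h
end
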